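/- Let G be a finite simple graph on a vertex type V and H a finite simple graph on a vertex type W, and let G ⊍ H denote their disjoint union: the simple graph on the sum type V ⊕ W in which two vertices are adjacent if and only if they are both in V and adjacent in G, or both in W and adjacent in H. If σ(G,x) and σ(H,x) have only real roots, then σ(G ⊍ H, x) has only real roots. -/

import Mathlib

open Polynomial

/-- `numIndepPartitions G i` is the number of partitions of the vertex set of `G` into
exactly `i` nonempty independent sets, encoded as the number of setoids (equivalence
relations) on `V` with exactly `i` equivalence classes, each class being an independent
set of `G`. -/
noncomputable def numIndepPartitions {V : Type*} (G : SimpleGraph V) (i : ℕ) : ℕ :=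
  Nat.card {P : Setoid V // Nat.card (Quotient P) = i ∧
    ∀ c ∈ P.classes, c.Pairwise fun u v => ¬ G.Adj u v}

/-- The σ-polynomial of a finite simple graph `G`: `σ(G,x) = ∑ aᵢ xⁱ` where `aᵢ` is the
number of partitions of the vertex set of `G` into `i` nonempty independent sets. -/
noncomputable def sigmaPoly {V : Type*} [Finite V] (G : SimpleGraph V) : Polynomial ℝ :=
  ∑ i ∈ Finset.range (Nat.card V + 1), (numIndepPartitions G i : ℝ) • X ^ i


/-- The disjoint union of two simple graphs. -/
def graphDisjUnion {V W : Type*} (G : SimpleGraph V) (H : SimpleGraph W) : SimpleGraph (V ⊕ W) where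
  Adj a b :=
    match a, b with
    | Sum.inl u, Sum.inl v => G.Adj u v
    | Sum.inr u, Sum.inr v => H.Adj u v
    | _, _ => False
  symm := ⟨by rintro (u | u) (v | v) h <;> simp_all [SimpleGraph.adj_comm]⟩
  loopless := ⟨by rintro (u | u) h <;> simp_all⟩

namespace SigmaProof

/-! ### Part II: analytic part.

If `f` and `g` are real-rooted real polynomials, the roots of `f` are nonpositive, then
`∑ i, f.coeff i • (X^i * (1 + d/dX)^i g)` is real-rooted.  This is proven via
nonvanishing on the upper half plane: for `Im z > 0` the value at `z` equals the value at
`z` of `(∏ (T - rⱼ)) g` where `T = z • (1 + d/dX)` and `rⱼ` are the roots of `f`; each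
factor preserves upper-half-plane nonvanishing by a logarithmic-derivative argument. -/

/-- Nonvanishing on the open upper half plane. -/
def UHP (p : Polynomial ℂ) : Prop := ∀ z : ℂ, 0 < z.im → p.eval z ≠ 0

lemma eval_derivative_multiset_prod (s : Multiset ℂ) (z : ℂ) (hz : ∀ ρ ∈ s, z ≠ ρ) :
    ((s.map fun ρ => X - C ρ).prod.derivative).eval z
      = (s.map fun ρ => X - C ρ).prod.eval z * (s.map fun ρ => (z - ρ)⁻¹).sum := by
  induction s using Multiset.induction with
  | empty => simp
  | cons a s ih =>
    have hza : z - a ≠ 0 := sub_ne_zero.mpr (hz a (Multiset.mem_cons_self _ _))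
    have ihs := ih (fun ρ hρ => hz ρ (Multiset.mem_cons_of_mem hρ))
    simp only [Multiset.map_cons, Multiset.prod_cons, Multiset.sum_cons, derivative_mul]
    simp only [eval_add, eval_mul, eval_sub, eval_X, eval_C, ihs, derivative_sub,
      derivative_X, derivative_C, sub_zero, eval_one]
    field_simp

lemma im_inv_sub_neg {z ρ : ℂ} (hz : 0 < z.im) (hρ : ρ.im ≤ 0) : ((z - ρ)⁻¹).im < 0 := by
  have him : 0 < (z - ρ).im := by simp [Complex.sub_im]; linarith
  have hne : z - ρ ≠ 0 := by
    intro h; rw [h] at him; simp at him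
  rw [Complex.inv_im]
  have : 0 < Complex.normSq (z - ρ) := Complex.normSq_pos.mpr hne
  exact div_neg_of_neg_of_pos (by linarith) this

lemma im_sum_inv_nonpos (s : Multiset ℂ) (z : ℂ) (hz : 0 < z.im)
    (hρ : ∀ ρ ∈ s, ρ.im ≤ 0) :
    ((s.map fun ρ => (z - ρ)⁻¹).sum).im ≤ 0 ∧
      (((s.map fun ρ => (z - ρ)⁻¹).sum).im = 0 → s = 0) := by
  induction s using Multiset.induction with
  | empty => simp
  | cons a s ih =>
    obtain ⟨h1, _h2⟩ := ih (fun ρ h => hρ ρ (Multiset.mem_cons_of_mem h))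
    have ha : ((z - a)⁻¹).im < 0 := im_inv_sub_neg hz (hρ a (Multiset.mem_cons_self _ _))
    constructor
    · simp only [Multiset.map_cons, Multiset.sum_cons, Complex.add_im]
      linarith
    · intro h
      exfalso
      simp only [Multiset.map_cons, Multiset.sum_cons, Complex.add_im] at h
      linarith

lemma eval_derivative_eq (P : Polynomial ℂ) (hP : P ≠ 0) (z : ℂ) (hz : P.eval z ≠ 0) :
    (P.derivative).eval z = P.eval z * ((P.roots.map fun ρ => (z - ρ)⁻¹).sum) := by
  set μ := P.roots with hμ
  have hsplit : P = C P.leadingCoeff * (μ.map fun ρ => X - C ρ).prod :=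
    Splits.eq_prod_roots (IsAlgClosed.splits P)
  have hzρ : ∀ ρ ∈ μ, z ≠ ρ := by
    intro ρ hρ h
    exact hz (by rw [h]; exact isRoot_of_mem_roots hρ)
  rw [hsplit, derivative_C_mul, eval_C_mul, eval_derivative_multiset_prod _ _ hzρ,
    eval_mul, eval_C]
  ring

lemma UHP.step {P : Polynomial ℂ} (hP : UHP P) {y : ℂ} (hy : 0 < y.im)
    {α : ℝ} (hα : 0 ≤ α) :
    UHP (y • (P + derivative P) + (α : ℂ) • P) := by
  intro z hz
  have hPz : P.eval z ≠ 0 := hP z hz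
  have hP0 : P ≠ 0 := fun h => hPz (by simp [h])
  have hroots : ∀ ρ ∈ P.roots, ρ.im ≤ 0 := by
    intro ρ hρ
    by_contra h
    exact hP ρ (by linarith) (isRoot_of_mem_roots hρ)
  set W : ℂ := (P.roots.map fun ρ => (z - ρ)⁻¹).sum with hW
  have hder : (P.derivative).eval z = P.eval z * W := eval_derivative_eq P hP0 z hPz
  have him := im_sum_inv_nonpos P.roots z hz hroots
  rw [← hW] at him
  have heval : (y • (P + derivative P) + (α : ℂ) • P).eval z
      = P.eval z * (y * (1 + W) + α) := by
    simp only [eval_add, eval_smul, smul_eq_mul, hder]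
    ring
  rw [heval]
  refine mul_ne_zero hPz ?_
  intro habs
  have hy0 : y ≠ 0 := by intro h; rw [h] at hy; simp at hy
  have hkey : 1 + W + (α : ℂ) * y⁻¹ = 0 := by
    have h2 : y * (1 + W + (α : ℂ) * y⁻¹) = y * (1 + W) + α := by
      field_simp
    have h3 : y * (1 + W + (α : ℂ) * y⁻¹) = 0 := by rw [h2, habs]
    exact (mul_eq_zero.mp h3).resolve_left hy0
  have hyinv : (y⁻¹).im < 0 := by
    rw [Complex.inv_im]
    exact div_neg_of_neg_of_pos (by linarith) (Complex.normSq_pos.mpr hy0)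
  have him0 : (1 + W + (α : ℂ) * y⁻¹).im = 0 := by rw [hkey]; simp
  have himα : ((α : ℂ) * y⁻¹).im ≤ 0 := by
    rw [Complex.mul_im]
    simp only [Complex.ofReal_re, Complex.ofReal_im, zero_mul, add_zero]
    exact mul_nonpos_of_nonneg_of_nonpos hα (le_of_lt hyinv)
  simp only [Complex.add_im, Complex.one_im, zero_add] at him0
  have hW0 : W.im = 0 := by linarith [him.1]
  have hs0 : P.roots = 0 := him.2 hW0
  have hWzero : W = 0 := by rw [hW, hs0]; simp
  have hαzero : α = 0 := by
    by_contra hne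
    have hpos : 0 < α := lt_of_le_of_ne hα (Ne.symm hne)
    have : ((α : ℂ) * y⁻¹).im < 0 := by
      rw [Complex.mul_im]
      simp only [Complex.ofReal_re, Complex.ofReal_im, zero_mul, add_zero]
      exact mul_neg_of_pos_of_neg hpos hyinv
    linarith
  rw [hWzero, hαzero] at hkey
  simp at hkey

/-- The operator `T = y • (1 + d/dX)` on complex polynomials. -/
noncomputable def Top (y : ℂ) : Module.End ℂ (Polynomial ℂ) :=
  y • (1 + (Polynomial.derivative : Polynomial ℂ →ₗ[ℂ] Polynomial ℂ))

lemma Top_apply (y : ℂ) (P : Polynomial ℂ) : Top y P = y • (P + derivative P) := by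
  simp [Top]

/-- The operator `p ↦ p + p'`. -/
noncomputable def D1 {R : Type*} [CommSemiring R] (p : Polynomial R) : Polynomial R :=
  p + derivative p

lemma map_D1 (g : Polynomial ℝ) :
    (D1 g).map (algebraMap ℝ ℂ) = D1 (g.map (algebraMap ℝ ℂ)) := by
  simp [D1, Polynomial.map_add, derivative_map]

lemma map_D1_iter (g : Polynomial ℝ) (i : ℕ) :
    (D1^[i] g).map (algebraMap ℝ ℂ) = D1^[i] (g.map (algebraMap ℝ ℂ)) := by
  induction i generalizing g with
  | zero => simp
  | succ i ih =>
    rw [Function.iterate_succ_apply, Function.iterate_succ_apply, ih, map_D1]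

lemma one_add_deriv_pow_apply (i : ℕ) (Q : Polynomial ℂ) :
    (((1 : Module.End ℂ (Polynomial ℂ))
        + (Polynomial.derivative : Polynomial ℂ →ₗ[ℂ] Polynomial ℂ)) ^ i) Q = D1^[i] Q := by
  induction i generalizing Q with
  | zero => simp
  | succ i ih =>
    rw [pow_succ', Module.End.mul_apply, Function.iterate_succ_apply', ← ih]
    show _ = D1 _
    simp only [D1, LinearMap.add_apply, Module.End.one_apply]

lemma Top_pow_apply (y : ℂ) (i : ℕ) (Q : Polynomial ℂ) :
    ((Top y) ^ i) Q = y ^ i • D1^[i] Q := by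
  have h1 : (Top y) ^ i
      = y ^ i • (1 + (Polynomial.derivative : Polynomial ℂ →ₗ[ℂ] Polynomial ℂ)) ^ i := by
    rw [Top, _root_.smul_pow]
  rw [h1, LinearMap.smul_apply, one_add_deriv_pow_apply]

lemma UHP_base {g : Polynomial ℝ} (hg0 : g ≠ 0) (hg : Splits g) :
    UHP (g.map (algebraMap ℝ ℂ)) := by
  intro z hz
  have hsplit : g = C g.leadingCoeff * (g.roots.map fun ρ => X - C ρ).prod :=
    Splits.eq_prod_roots hg
  rw [hsplit]
  rw [Polynomial.map_mul, Polynomial.map_C, Polynomial.map_multiset_prod]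
  rw [eval_mul, eval_C]
  refine mul_ne_zero ?_ ?_
  · simpa using leadingCoeff_ne_zero.mpr hg0
  · rw [eval_multiset_prod]
    apply Multiset.prod_ne_zero
    intro h0
    simp only [Multiset.map_map, Multiset.mem_map] at h0
    obtain ⟨ρ, _, hρ⟩ := h0
    simp only [Function.comp_apply, Polynomial.map_sub, map_X, map_C, eval_sub, eval_X,
      eval_C] at hρ
    have h2 : (z - ((algebraMap ℝ ℂ) ρ)).im = z.im := by
      simp [Complex.sub_im]
    rw [hρ] at h2
    simp at h2
    linarith

lemma UHP_fold (y : ℂ) (hy : 0 < y.im) (s : Multiset ℝ) (hs : ∀ r ∈ s, r ≤ 0)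
    {Q : Polynomial ℂ} (hQ : UHP Q) :
    UHP ((Polynomial.aeval (Top y) ((s.map fun r : ℝ => X - C ((r : ℂ))).prod)) Q) := by
  induction s using Multiset.induction with
  | empty => simpa using hQ
  | cons a s ih =>
    have ha : a ≤ 0 := hs a (Multiset.mem_cons_self _ _)
    have ihs := ih (fun r h => hs r (Multiset.mem_cons_of_mem h))
    rw [Multiset.map_cons, Multiset.prod_cons, map_mul, Module.End.mul_apply]
    set R := (Polynomial.aeval (Top y) ((s.map fun r : ℝ => X - C ((r : ℂ))).prod)) Q with hR
    have hstep : (Polynomial.aeval (Top y) (X - C ((a : ℂ)))) R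
        = y • (R + derivative R) + (((-a : ℝ)) : ℂ) • R := by
      rw [map_sub, aeval_X, aeval_C]
      simp only [LinearMap.sub_apply, Top_apply, Module.algebraMap_end_apply]
      push_cast
      module
    rw [hstep]
    exact ihs.step hy (by linarith)

lemma aeval_Top_apply (f : Polynomial ℝ) (g : Polynomial ℝ) (N : ℕ) (hN : f.natDegree < N)
    (y : ℂ) :
    (Polynomial.aeval (Top y) (f.map (algebraMap ℝ ℂ))) (g.map (algebraMap ℝ ℂ))
      = ∑ i ∈ Finset.range N,
          (((f.coeff i : ℂ)) * y ^ i) • ((D1^[i] g).map (algebraMap ℝ ℂ)) := by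
  conv_lhs => rw [f.as_sum_range' N hN]
  rw [Polynomial.map_sum, map_sum, LinearMap.sum_apply]
  apply Finset.sum_congr rfl
  intro i _
  rw [Polynomial.map_monomial, aeval_monomial, Module.End.mul_apply,
    Module.algebraMap_end_apply, Top_pow_apply, map_D1_iter, smul_smul]
  norm_num

lemma conj_eval (p : Polynomial ℝ) (z : ℂ) :
    (p.map (algebraMap ℝ ℂ)).eval ((starRingEnd ℂ) z)
      = (starRingEnd ℂ) ((p.map (algebraMap ℝ ℂ)).eval z) := by
  rw [eval_map, eval_map, hom_eval₂]
  congr 1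
  ext x
  simp

/-- Main analytic theorem (Part II). -/
theorem splits_dsum (f g : Polynomial ℝ) (N : ℕ) (hN : f.natDegree < N)
    (hf0 : f ≠ 0) (hg0 : g ≠ 0)
    (hf : f.Splits) (hg : g.Splits)
    (hroots : ∀ r ∈ f.roots, r ≤ 0) :
    (∑ i ∈ Finset.range N, f.coeff i • (X ^ i * D1^[i] g)).Splits := by
  set h : Polynomial ℝ := ∑ i ∈ Finset.range N, f.coeff i • (X ^ i * D1^[i] g) with hh
  set hc : Polynomial ℂ := h.map (algebraMap ℝ ℂ) with hhc
  have hdiag : ∀ z : ℂ,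
      hc.eval z = ((Polynomial.aeval (Top z) (f.map (algebraMap ℝ ℂ)))
        (g.map (algebraMap ℝ ℂ))).eval z := by
    intro z
    rw [aeval_Top_apply f g N hN z]
    rw [hhc, hh, Polynomial.map_sum, eval_finset_sum, eval_finset_sum]
    apply Finset.sum_congr rfl
    intro i _
    rw [smul_eq_C_mul, Polynomial.map_mul, Polynomial.map_C, Polynomial.map_mul,
      Polynomial.map_pow, map_X, eval_mul, eval_mul, eval_C, eval_pow, eval_X,
      eval_smul, smul_eq_mul, Complex.coe_algebraMap]
    ring
  have hfsplit : f = C f.leadingCoeff * (f.roots.map fun ρ => X - C ρ).prod :=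
    Splits.eq_prod_roots hf
  have hfc : f.map (algebraMap ℝ ℂ)
      = C ((algebraMap ℝ ℂ) f.leadingCoeff)
          * ((f.roots.map fun r : ℝ => X - C ((r : ℂ)))).prod := by
    conv_lhs => rw [hfsplit]
    rw [Polynomial.map_mul, Polynomial.map_C, Polynomial.map_multiset_prod, Multiset.map_map]
    congr 2
    apply Multiset.map_congr rfl
    intro ρ _
    simp
  have hUHP : UHP hc := by
    intro z hz
    rw [hdiag z, hfc, map_mul, aeval_C, Module.End.mul_apply, Module.algebraMap_end_apply,
      eval_smul, smul_eq_mul]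
    refine mul_ne_zero ?_ ?_
    · simpa using leadingCoeff_ne_zero.mpr hf0
    · exact UHP_fold z hz f.roots hroots (UHP_base hg0 hg) z hz
  have hLHP : ∀ z : ℂ, z.im < 0 → hc.eval z ≠ 0 := by
    intro z hz habs
    have h1 : 0 < ((starRingEnd ℂ) z).im := by
      simp [Complex.conj_im]; linarith
    have h2 := hUHP _ h1
    rw [hhc, conj_eval h z] at h2
    rw [← hhc] at h2
    exact h2 (by rw [habs]; simp)
  have hc0 : hc ≠ 0 := by
    intro h0
    have := hUHP Complex.I (by simp)
    rw [h0] at this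
    simp at this
  have h0 : h ≠ 0 := by
    intro h0
    apply hc0
    rw [hhc, h0, Polynomial.map_zero]
  have hreal : ∀ ρ ∈ hc.roots, ρ.im = 0 := by
    intro ρ hρ
    have hroot : hc.eval ρ = 0 := isRoot_of_mem_roots hρ
    rcases lt_trichotomy ρ.im 0 with hlt | heq | hgt
    · exact absurd hroot (hLHP ρ hlt)
    · exact heq
    · exact absurd hroot (hUHP ρ hgt)
  have hsplitc : hc = C hc.leadingCoeff * (hc.roots.map fun ρ => X - C ρ).prod :=
    Splits.eq_prod_roots (IsAlgClosed.splits hc)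
  obtain ⟨μ, hfact⟩ : ∃ μ : Multiset ℝ,
      hc.roots.map (fun ρ => X - C ρ) = μ.map (fun r : ℝ => X - C ((r : ℂ))) := by
    refine ⟨hc.roots.map Complex.re, ?_⟩
    rw [Multiset.map_map]
    apply Multiset.map_congr rfl
    intro ρ hρ
    have : ((ρ.re : ℝ) : ℂ) = ρ := by
      apply Complex.ext <;> simp [hreal ρ hρ]
    simp [Function.comp_apply, this]
  have hlc : hc.leadingCoeff = (algebraMap ℝ ℂ) h.leadingCoeff := by
    rw [hhc]
    exact leadingCoeff_map _
  have hdescend : h = C h.leadingCoeff * (μ.map fun r : ℝ => X - C r).prod := by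
    apply Polynomial.map_injective (algebraMap ℝ ℂ) (algebraMap ℝ ℂ).injective
    rw [← hhc]
    rw [hsplitc, hfact, hlc]
    rw [Polynomial.map_mul, Polynomial.map_C, Polynomial.map_multiset_prod, Multiset.map_map]
    congr 2
    apply Multiset.map_congr rfl
    intro r _
    simp
  rw [splits_iff_exists_multiset]
  refine ⟨μ, ?_⟩
  exact hdescend

/-! ### Part I: combinatorial part. -/

instance finite_setoid {V : Type*} [Finite V] : Finite (Setoid V) :=
  Finite.of_injective (fun s : Setoid V => s.r)
    (fun s t h => Setoid.ext (fun {a b} => by rw [show s.r = t.r from h]))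

def Indep {V : Type*} (G : SimpleGraph V) (P : Setoid V) : Prop :=
  ∀ c ∈ P.classes, c.Pairwise fun u v => ¬ G.Adj u v

def Proper {V : Type*} (G : SimpleGraph V) {k : ℕ} (f : V → Fin k) : Prop :=
  ∀ u v, G.Adj u v → f u ≠ f v

/-- Proper colorings correspond to pairs of an independent partition and an injection of
its blocks into the colors. -/
noncomputable def colEquiv {V : Type*} (G : SimpleGraph V) (k : ℕ) :
    (Σ P : {P : Setoid V // Indep G P}, (Quotient P.1 ↪ Fin k))
      ≃ {f : V → Fin k // Proper G f} := by
  apply Equiv.ofBijective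
    (fun x => ⟨fun v => x.2 (Quotient.mk x.1.1 v), by
      intro u v hadj heq
      have h1 : Quotient.mk x.1.1 u = Quotient.mk x.1.1 v := x.2.injective heq
      have hr : x.1.1 u v := Quotient.eq.mp h1
      have hc := x.1.1.mem_classes v
      have hne : u ≠ v := G.ne_of_adj hadj
      exact x.1.2 _ hc hr (x.1.1.refl v) hne hadj⟩)
  constructor
  · rintro ⟨⟨P₁, h₁⟩, e₁⟩ ⟨⟨P₂, h₂⟩, e₂⟩ heq
    have hfun : ∀ v, e₁ (Quotient.mk P₁ v) = e₂ (Quotient.mk P₂ v) := by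
      intro v
      exact congrFun (congrArg Subtype.val heq) v
    have hP : P₁ = P₂ := by
      apply Setoid.ext
      intro a b
      constructor
      · intro hab
        have : Quotient.mk P₁ a = Quotient.mk P₁ b := Quotient.sound hab
        have h2 : e₂ (Quotient.mk P₂ a) = e₂ (Quotient.mk P₂ b) := by
          rw [← hfun a, ← hfun b, this]
        exact Quotient.eq.mp (e₂.injective h2)
      · intro hab
        have : Quotient.mk P₂ a = Quotient.mk P₂ b := Quotient.sound hab
        have h2 : e₁ (Quotient.mk P₁ a) = e₁ (Quotient.mk P₁ b) := by
          rw [hfun a, hfun b, this]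
        exact Quotient.eq.mp (e₁.injective h2)
    subst hP
    simp only [Sigma.mk.inj_iff, Subtype.mk.injEq, heq_eq_eq, true_and]
    apply DFunLike.ext
    intro q
    induction q using Quotient.ind with
    | _ v => exact hfun v
  · rintro ⟨f, hf⟩
    refine ⟨⟨⟨Setoid.ker f, ?_⟩, ⟨Quotient.lift f (fun a b h => h), ?_⟩⟩, ?_⟩
    · intro c hc
      obtain ⟨y, rfl⟩ := hc
      intro u hu v hv hne hadj
      exact hf u v hadj (hu.trans hv.symm)
    · intro q₁ q₂
      induction q₁ using Quotient.ind with
      | _ a =>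
        induction q₂ using Quotient.ind with
        | _ b =>
          intro h
          exact Quotient.sound h
    · apply Subtype.ext
      funext v
      rfl

lemma card_proper {V : Type*} [Finite V] (G : SimpleGraph V) (k : ℕ) :
    Nat.card {f : V → Fin k // Proper G f}
      = ∑ i ∈ Finset.range (Nat.card V + 1), numIndepPartitions G i * k.descFactorial i := by
  classical
  letI : Fintype V := Fintype.ofFinite V
  letI : Fintype {P : Setoid V // Indep G P} := Fintype.ofFinite _
  letI : ∀ P : {P : Setoid V // Indep G P}, Fintype (Quotient P.1) :=
    fun P => Fintype.ofFinite _
  letI : ∀ P : {P : Setoid V // Indep G P}, Fintype (Quotient P.1 ↪ Fin k) :=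
    fun P => Fintype.ofFinite _
  rw [← Nat.card_congr (colEquiv G k), Nat.card_eq_fintype_card]
  rw [Fintype.card_sigma]
  have hterm : ∀ P : {P : Setoid V // Indep G P},
      Fintype.card (Quotient P.1 ↪ Fin k)
        = k.descFactorial (Nat.card (Quotient P.1)) := by
    intro P
    rw [Fintype.card_embedding_eq, Fintype.card_fin, Nat.card_eq_fintype_card]
  have hmaps : ∀ P : {P : Setoid V // Indep G P}, P ∈ Finset.univ →
      Nat.card (Quotient P.1) ∈ Finset.range (Nat.card V + 1) := by
    intro P _
    rw [Finset.mem_range, Nat.lt_succ_iff]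
    exact Nat.card_le_card_of_surjective (Quotient.mk P.1) Quotient.mk_surjective
  rw [Finset.sum_congr rfl (fun P _ => hterm P)]
  rw [← Finset.sum_fiberwise_of_maps_to hmaps
    (fun P => k.descFactorial (Nat.card (Quotient P.1)))]
  apply Finset.sum_congr rfl
  intro i _
  have hinner : ∀ P ∈ Finset.univ.filter
      (fun P : {P : Setoid V // Indep G P} => Nat.card (Quotient P.1) = i),
      k.descFactorial (Nat.card (Quotient P.1)) = k.descFactorial i := by
    intro P hP
    rw [Finset.mem_filter] at hP
    rw [hP.2]
  rw [Finset.sum_congr rfl hinner, Finset.sum_const, smul_eq_mul]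
  congr 1
  rw [← Fintype.card_subtype]
  have e1 : {P : {P : Setoid V // Indep G P} // Nat.card (Quotient P.1) = i}
      ≃ {P : Setoid V // Nat.card (Quotient P) = i ∧ Indep G P} :=
    (Equiv.subtypeSubtypeEquivSubtypeInter (Indep G)
      (fun P => Nat.card (Quotient P) = i)).trans
      (Equiv.subtypeEquivRight (fun P => and_comm))
  rw [numIndepPartitions, ← Nat.card_eq_fintype_card]
  exact Nat.card_congr e1

lemma card_proper_disjUnion {V W : Type*} (G : SimpleGraph V) (H : SimpleGraph W) (k : ℕ) :
    Nat.card {f : V ⊕ W → Fin k // Proper (graphDisjUnion G H) f}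
      = Nat.card {f : V → Fin k // Proper G f} * Nat.card {f : W → Fin k // Proper H f} := by
  rw [← Nat.card_prod]
  apply Nat.card_congr
  refine ⟨fun f => (⟨fun v => f.1 (Sum.inl v), fun u v h => f.2 _ _ h⟩,
      ⟨fun w => f.1 (Sum.inr w), fun u v h => f.2 _ _ h⟩),
    fun p => ⟨Sum.elim p.1.1 p.2.1, ?_⟩, ?_, ?_⟩
  · rintro (u | u) (v | v) hadj
    · exact p.1.2 u v hadj
    · exact absurd hadj (by simp [graphDisjUnion])
    · exact absurd hadj (by simp [graphDisjUnion])
    · exact p.2.2 u v hadj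
  · intro f
    apply Subtype.ext
    funext x
    cases x <;> rfl
  · intro p
    apply Prod.ext <;> apply Subtype.ext <;> rfl

/-! ### The falling-factorial transform and operator identities -/

noncomputable def Phi : Polynomial ℝ →ₗ[ℝ] Polynomial ℝ :=
  Polynomial.lsum (fun i => LinearMap.toSpanSingleton ℝ _ (descPochhammer ℝ i))

lemma Phi_monomial (i : ℕ) (c : ℝ) : Phi (monomial i c) = c • descPochhammer ℝ i := by
  rw [Phi, Polynomial.lsum_apply, Polynomial.sum_monomial_index]
  · rfl
  · simp

lemma Phi_smul_X_pow (i : ℕ) (c : ℝ) : Phi (c • X ^ i) = c • descPochhammer ℝ i := by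
  rw [smul_X_eq_monomial, Phi_monomial]

lemma Phi_sigma_form (c : ℕ → ℝ) (N : ℕ) :
    Phi (∑ i ∈ Finset.range N, c i • X ^ i)
      = ∑ i ∈ Finset.range N, c i • descPochhammer ℝ i := by
  rw [map_sum]
  exact Finset.sum_congr rfl (fun i _ => Phi_smul_X_pow i (c i))

lemma coeff_sigma_form (c : ℕ → ℝ) (N j : ℕ) :
    (∑ i ∈ Finset.range N, c i • X ^ i).coeff j = if j < N then c j else 0 := by
  rw [finset_sum_coeff]
  simp only [coeff_smul, coeff_X_pow, smul_eq_mul, mul_ite, mul_one, mul_zero]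
  rw [Finset.sum_ite_eq (Finset.range N) j c]
  simp [Finset.mem_range]

lemma natDegree_sigma_form (c : ℕ → ℝ) (N : ℕ) (hN : 0 < N) :
    (∑ i ∈ Finset.range N, c i • (X : Polynomial ℝ) ^ i).natDegree < N := by
  have h := Polynomial.natDegree_sum_le (Finset.range N) (fun i => c i • (X : Polynomial ℝ) ^ i)
  rw [Nat.lt_iff_le_pred hN]
  refine le_trans h ?_
  rw [Finset.fold_max_le]
  constructor
  · omega
  · intro i hi
    rw [Finset.mem_range] at hi
    refine le_trans (natDegree_smul_le _ _) ?_
    rw [natDegree_X_pow]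
    omega

lemma Phi_injective : Function.Injective Phi := by
  have h0 : ∀ p : Polynomial ℝ, Phi p = 0 → p = 0 := by
    intro p hp
    by_contra hne
    have hform := Polynomial.as_sum_range' p (p.natDegree + 1) (Nat.lt_succ_self _)
    have hPhi : Phi p = ∑ i ∈ Finset.range (p.natDegree + 1),
        p.coeff i • descPochhammer ℝ i := by
      conv_lhs => rw [hform]
      rw [map_sum]
      exact Finset.sum_congr rfl (fun i _ => Phi_monomial i (p.coeff i))
    have hcoeff : (Phi p).coeff p.natDegree = p.coeff p.natDegree := by
      rw [hPhi, finset_sum_coeff]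
      rw [Finset.sum_eq_single p.natDegree]
      · have h1 : (descPochhammer ℝ p.natDegree).coeff p.natDegree = 1 := by
          have hm := monic_descPochhammer ℝ p.natDegree
          have hd := descPochhammer_natDegree ℝ p.natDegree
          rw [Monic, leadingCoeff, hd] at hm
          exact hm
        rw [coeff_smul, h1, smul_eq_mul, mul_one]
      · intro i hi hne'
        rw [Finset.mem_range] at hi
        rw [coeff_smul]
        have : (descPochhammer ℝ i).coeff p.natDegree = 0 := by
          apply coeff_eq_zero_of_natDegree_lt
          rw [descPochhammer_natDegree]
          omega
        rw [this, smul_zero]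
      · intro hmem
        exact absurd (Finset.self_mem_range_succ p.natDegree) hmem
    rw [hp, coeff_zero] at hcoeff
    exact hne (leadingCoeff_eq_zero.mp hcoeff.symm)
  intro p q hpq
  have h1 : Phi (p - q) = 0 := by rw [map_sub, hpq, sub_self]
  exact sub_eq_zero.mp (h0 _ h1)

lemma D1_add {R : Type*} [CommSemiring R] (p q : Polynomial R) :
    D1 (p + q) = D1 p + D1 q := by
  simp only [D1, derivative_add]; ring

lemma D1_iter_add {R : Type*} [CommSemiring R] (i : ℕ) (p q : Polynomial R) :
    D1^[i] (p + q) = D1^[i] p + D1^[i] q := by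
  induction i generalizing p q with
  | zero => simp
  | succ i ih =>
    simp only [Function.iterate_succ_apply, D1_add, ih]

lemma D1_smul (c : ℝ) (p : Polynomial ℝ) : D1 (c • p) = c • D1 p := by
  simp only [D1, derivative_smul, smul_add]

/-- `Φ(X·(p + p')) = X·Φ(p)` -/
lemma Phi_X_mul_D1 (p : Polynomial ℝ) : Phi (X * D1 p) = X * Phi p := by
  induction p using Polynomial.induction_on' with
  | add p q hp hq =>
    rw [D1_add, mul_add, map_add, hp, hq, map_add, mul_add]
  | monomial j c =>
    rw [← smul_X_eq_monomial, D1_smul]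
    cases j with
    | zero =>
      have h0 : D1 ((X:Polynomial ℝ) ^ 0) = (X:Polynomial ℝ) ^ 0 := by
        simp only [D1, pow_zero, derivative_one, add_zero]
      have h1 : X * (c • D1 ((X:Polynomial ℝ) ^ 0)) = c • (X:Polynomial ℝ) ^ 1 := by
        rw [h0, mul_smul_comm, pow_zero, mul_one, pow_one]
      rw [h1, Phi_smul_X_pow, Phi_smul_X_pow, descPochhammer_one, descPochhammer_zero]
      rw [mul_smul_comm, mul_one]
    | succ j =>
      have h1 : X * (c • D1 ((X:Polynomial ℝ) ^ (j+1)))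
          = c • (X:Polynomial ℝ) ^ (j+2)
            + (c * ((j+1 : ℕ) : ℝ)) • (X:Polynomial ℝ) ^ (j+1) := by
        simp only [D1, derivative_X_pow, Nat.add_sub_cancel, smul_eq_C_mul, map_mul,
          map_natCast]
        ring
      rw [h1, map_add, Phi_smul_X_pow, Phi_smul_X_pow, Phi_smul_X_pow,
        descPochhammer_succ_right ℝ (j+1)]
      simp only [smul_eq_C_mul, map_mul, map_natCast]
      push_cast
      ring

lemma D1_iter_X_mul (i : ℕ) (h : Polynomial ℝ) :
    D1^[i+1] (X * h) = X * D1^[i+1] h + (i+1) • D1^[i] h := by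
  induction i generalizing h with
  | zero =>
    simp only [zero_add, Function.iterate_one, one_smul, Function.iterate_zero, id_eq]
    simp only [D1, derivative_mul, derivative_X]
    ring
  | succ i ih =>
    have hbase : D1 (X * h) = X * D1 h + h := by
      simp only [D1, derivative_mul, derivative_X]
      ring
    rw [Function.iterate_succ_apply, hbase, D1_iter_add, ih (D1 h),
      ← Function.iterate_succ_apply, ← Function.iterate_succ_apply]
    rw [succ_nsmul ((D1^[i+1]) h) (i+1)]
    abel

lemma key_identity (i : ℕ) (p : Polynomial ℝ) :
    X ^ i * D1^[i] (X * D1 p)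
      = X ^ (i+1) * D1^[i+1] p + i • (X ^ i * D1^[i] p) := by
  cases i with
  | zero => simp
  | succ j =>
    rw [D1_iter_X_mul j (D1 p), ← Function.iterate_succ_apply, mul_add, mul_smul_comm]
    rw [← Function.iterate_succ_apply]
    ring

lemma Phi_key (i : ℕ) : ∀ p : Polynomial ℝ,
    Phi (X ^ i * D1^[i] p) = descPochhammer ℝ i * Phi p := by
  induction i with
  | zero =>
    intro p
    simp [descPochhammer_zero]
  | succ i ih =>
    intro p
    have hk := congrArg Phi (key_identity i p)
    rw [map_add, map_nsmul, ih (X * D1 p), Phi_X_mul_D1, ih p] at hk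
    have h2 : Phi (X ^ (i+1) * D1^[i+1] p)
        = descPochhammer ℝ i * (X * Phi p) - i • (descPochhammer ℝ i * Phi p) :=
      eq_sub_of_add_eq hk.symm
    rw [h2, descPochhammer_succ_right, nsmul_eq_mul]
    ring

lemma Phi_dsum (c : ℕ → ℝ) (N : ℕ) (g : Polynomial ℝ) :
    Phi (∑ i ∈ Finset.range N, c i • (X ^ i * D1^[i] g))
      = (∑ i ∈ Finset.range N, c i • descPochhammer ℝ i) * Phi g := by
  rw [map_sum, Finset.sum_mul]
  apply Finset.sum_congr rfl
  intro i _
  rw [map_smul, Phi_key, smul_mul_assoc]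

/-! ### Remaining glue -/

lemma numIndep_card_pos {V : Type*} [Finite V] (G : SimpleGraph V) :
    0 < numIndepPartitions G (Nat.card V) := by
  rw [numIndepPartitions]
  have hbot : Nat.card (Quotient (⊥ : Setoid V)) = Nat.card V := by
    apply Nat.card_congr
    apply (Equiv.ofBijective (Quotient.mk ⊥) ?_).symm
    constructor
    · intro a b h
      exact Quotient.eq.mp h
    · exact Quotient.mk_surjective
  have hind : ∀ c ∈ (⊥ : Setoid V).classes, c.Pairwise fun u v => ¬ G.Adj u v := by
    intro c hc
    obtain ⟨y, rfl⟩ := hc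
    intro u hu v hv hne
    have hu' : u = y := hu
    have hv' : v = y := hv
    exact absurd (hu'.trans hv'.symm) hne
  have : Nonempty {P : Setoid V // Nat.card (Quotient P) = Nat.card V ∧
      ∀ c ∈ P.classes, c.Pairwise fun u v => ¬ G.Adj u v} := ⟨⟨⊥, hbot, hind⟩⟩
  exact Nat.card_pos

lemma roots_nonpos (p : Polynomial ℝ) (hp : p ≠ 0) (hnn : ∀ i, 0 ≤ p.coeff i) :
    ∀ r ∈ p.roots, r ≤ 0 := by
  intro r hr
  by_contra hpos
  push_neg at hpos
  have hroot : p.eval r = 0 := isRoot_of_mem_roots hr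
  rw [eval_eq_sum_range] at hroot
  have hsum : 0 < ∑ i ∈ Finset.range (p.natDegree + 1), p.coeff i * r ^ i := by
    apply Finset.sum_pos'
    · intro i _
      exact mul_nonneg (hnn i) (le_of_lt (pow_pos hpos i))
    · refine ⟨p.natDegree, Finset.self_mem_range_succ _, ?_⟩
      apply mul_pos ?_ (pow_pos hpos _)
      have h := hnn p.natDegree
      rcases h.lt_or_eq with h | h
      · exact h
      · exact absurd (leadingCoeff_eq_zero.mp h.symm) hp
  rw [hroot] at hsum
  exact lt_irrefl 0 hsum

lemma sigmaPoly_eq {V : Type*} [Finite V] (G : SimpleGraph V) :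
    sigmaPoly G = ∑ i ∈ Finset.range (Nat.card V + 1),
      (numIndepPartitions G i : ℝ) • X ^ i := rfl

lemma coeff_sigmaPoly {V : Type*} [Finite V] (G : SimpleGraph V) (j : ℕ) :
    (sigmaPoly G).coeff j
      = if j < Nat.card V + 1 then (numIndepPartitions G j : ℝ) else 0 := by
  rw [sigmaPoly_eq]
  exact coeff_sigma_form _ _ _

lemma coeff_sigmaPoly_nonneg {V : Type*} [Finite V] (G : SimpleGraph V) (j : ℕ) :
    0 ≤ (sigmaPoly G).coeff j := by
  rw [coeff_sigmaPoly]
  split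
  · positivity
  · exact le_refl 0

lemma sigmaPoly_ne_zero {V : Type*} [Finite V] (G : SimpleGraph V) :
    sigmaPoly G ≠ 0 := by
  intro h0
  have h1 : (sigmaPoly G).coeff (Nat.card V) = (numIndepPartitions G (Nat.card V) : ℝ) := by
    rw [coeff_sigmaPoly, if_pos (Nat.lt_succ_self _)]
  rw [h0, coeff_zero] at h1
  have h2 := numIndep_card_pos G
  have h3 : (0:ℝ) < (numIndepPartitions G (Nat.card V) : ℝ) := by exact_mod_cast h2
  rw [← h1] at h3
  norm_num at h3

lemma natDegree_sigmaPoly_lt {V : Type*} [Finite V] (G : SimpleGraph V) :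
    (sigmaPoly G).natDegree < Nat.card V + 1 := by
  rw [sigmaPoly_eq]
  exact natDegree_sigma_form _ _ (Nat.succ_pos _)

lemma eval_Phi_sigmaPoly {V : Type*} [Finite V] (G : SimpleGraph V) (k : ℕ) :
    (Phi (sigmaPoly G)).eval ((k : ℝ))
      = (Nat.card {f : V → Fin k // Proper G f} : ℝ) := by
  rw [sigmaPoly_eq, Phi_sigma_form, eval_finset_sum, card_proper G k]
  push_cast
  apply Finset.sum_congr rfl
  intro i _
  rw [eval_smul, smul_eq_mul, descPochhammer_eval_eq_descFactorial]

lemma Phi_sigma_mul {V W : Type*} [Finite V] [Finite W]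
    (G : SimpleGraph V) (H : SimpleGraph W) :
    Phi (sigmaPoly (graphDisjUnion G H)) = Phi (sigmaPoly G) * Phi (sigmaPoly H) := by
  apply Polynomial.eq_of_infinite_eval_eq
  apply Set.Infinite.mono ?_
    (Set.infinite_range_of_injective (f := (Nat.cast : ℕ → ℝ)) Nat.cast_injective)
  rintro x ⟨k, rfl⟩
  simp only [Set.mem_setOf_eq]
  rw [eval_mul, eval_Phi_sigmaPoly, eval_Phi_sigmaPoly, eval_Phi_sigmaPoly,
    card_proper_disjUnion G H k]
  push_cast
  ring

lemma sigma_disj_eq {V W : Type*} [Finite V] [Finite W]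
    (G : SimpleGraph V) (H : SimpleGraph W) :
    sigmaPoly (graphDisjUnion G H)
      = ∑ i ∈ Finset.range (Nat.card V + 1),
          (numIndepPartitions G i : ℝ) • (X ^ i * D1^[i] (sigmaPoly H)) := by
  apply Phi_injective
  rw [Phi_dsum, Phi_sigma_mul G H, sigmaPoly_eq G, Phi_sigma_form]

end SigmaProof

theorem sigmaPoly_disjUnion_splits {V W : Type*} [Finite V] [Finite W]
    (G : SimpleGraph V) (H : SimpleGraph W)
    (hG : (sigmaPoly G).Splits)
    (hH : (sigmaPoly H).Splits) :
    (sigmaPoly (graphDisjUnion G H)).Splits := by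
  rw [SigmaProof.sigma_disj_eq G H]
  have hcoeff : ∀ i ∈ Finset.range (Nat.card V + 1),
      (numIndepPartitions G i : ℝ) • (X ^ i * SigmaProof.D1^[i] (sigmaPoly H))
        = (sigmaPoly G).coeff i • (X ^ i * SigmaProof.D1^[i] (sigmaPoly H)) := by
    intro i hi
    rw [Finset.mem_range] at hi
    rw [SigmaProof.coeff_sigmaPoly, if_pos hi]
  rw [Finset.sum_congr rfl hcoeff]
  exact SigmaProof.splits_dsum (sigmaPoly G) (sigmaPoly H) (Nat.card V + 1)
    (SigmaProof.natDegree_sigmaPoly_lt G)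
    (SigmaProof.sigmaPoly_ne_zero G) (SigmaProof.sigmaPoly_ne_zero H)
    hG hH
    (SigmaProof.roots_nonpos _ (SigmaProof.sigmaPoly_ne_zero G)
      (SigmaProof.coeff_sigmaPoly_nonneg G))
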